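/- Let N ≥ 2 workers run GADMM with penalty ρ > 0, generating primal iterates θ_n^k and dual iterates λ_n^k, and suppose the unaugmented Lagrangian L_0({θ_n},{λ_n}) = Σ_{n=1}^N f_n(θ_n) + Σ_{n=1}^{N−1} ⟨λ_n, θ_n − θ_{n+1}⟩ has a saddle point ((θ*,…,θ*), (λ_1*,…,λ_{N−1}*)). Then for every odd n the dual residual converges to zero: lim_{k→∞} s_n^k = 0, where s_n^k = ρ(θ_{n−1}^k − θ_{n−1}^{k−1}) + ρ(θ_{n+1}^k − θ_{n+1}^{k−1}) for odd n > 1 and s_1^k = ρ(θ_2^k − θ_2^{k−1}). -/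

import Mathlib

open Finset Filter
open scoped RealInnerProductSpace Topology

/-- The unaugmented Lagrangian `L_0({θ_n}, {λ_n})`. -/
noncomputable def L0 {E : Type*} [NormedAddCommGroup E] [InnerProductSpace ℝ E]
    (N : ℕ) (f : ℕ → E → ℝ) (th la : ℕ → E) : ℝ :=
  ∑ n ∈ Finset.Icc 1 N, f n (th n)
    + ∑ n ∈ Finset.Icc 1 (N-1), ⟪la n, th n - th (n+1)⟫

def ee (j : ℕ) : ℕ := if Odd j then j+1 else j

def oo (j : ℕ) : ℕ := if Odd j then j else j+1

lemma lin_opt {E : Type*} [NormedAddCommGroup E] [InnerProductSpace ℝ E]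
    (f : E → ℝ) (hf : ConvexOn ℝ Set.univ f)
    (a b₁ b₂ θ0 : E) (c₁ c₂ : ℝ) (hc₁ : 0 ≤ c₁) (hc₂ : 0 ≤ c₂)
    (hopt : ∀ x : E, f θ0 + ⟪a, θ0⟫ + c₁/2*‖θ0 - b₁‖^2 + c₂/2*‖θ0 - b₂‖^2
      ≤ f x + ⟪a, x⟫ + c₁/2*‖x - b₁‖^2 + c₂/2*‖x - b₂‖^2) :
    ∀ x : E, f θ0 ≤ f x + ⟪a + c₁•(θ0-b₁) + c₂•(θ0-b₂), x - θ0⟫ := by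
  intro x
  have key : ∀ t : ℝ, 0 < t → t ≤ 1 →
      0 ≤ (f x - f θ0 + ⟪a, x-θ0⟫ + c₁*⟪θ0-b₁, x-θ0⟫ + c₂*⟪θ0-b₂, x-θ0⟫)
        + t*((c₁+c₂)/2*‖x-θ0‖^2) := by
    intro t ht0 ht1
    have hxt := hopt (θ0 + t • (x - θ0))
    have hcvx := hf.2 (Set.mem_univ θ0) (Set.mem_univ x)
      (show (0:ℝ) ≤ 1-t by linarith) ht0.le (by ring)
    simp only [smul_eq_mul] at hcvx
    have hxteq : θ0 + t • (x - θ0) = (1-t)•θ0 + t•x := by module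
    rw [hxteq] at hxt
    have hq : ∀ b : E, ‖((1-t)•θ0 + t•x) - b‖^2
        = ‖θ0-b‖^2 + 2*t*⟪θ0-b, x-θ0⟫ + t^2*‖x-θ0‖^2 := by
      intro b
      have h1 : ((1-t)•θ0 + t•x) - b = (θ0-b) + t•(x-θ0) := by module
      rw [h1, norm_add_sq_real, real_inner_smul_right, norm_smul]
      simp [mul_pow, sq_abs]
      ring
    have hlin : ⟪a, (1-t)•θ0 + t•x⟫ = ⟪a, θ0⟫ + t*⟪a, x-θ0⟫ := by
      have h1 : (1-t)•θ0 + t•x = θ0 + t•(x-θ0) := by module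
      rw [h1, inner_add_right, real_inner_smul_right]
    rw [hq b₁, hq b₂, hlin] at hxt
    have step : 0 ≤ t * ((f x - f θ0 + ⟪a, x-θ0⟫ + c₁*⟪θ0-b₁, x-θ0⟫ + c₂*⟪θ0-b₂, x-θ0⟫)
        + t*((c₁+c₂)/2*‖x-θ0‖^2)) := by nlinarith [hxt, hcvx]
    exact nonneg_of_mul_nonneg_right step ht0
  have hA : 0 ≤ f x - f θ0 + ⟪a, x-θ0⟫ + c₁*⟪θ0-b₁, x-θ0⟫ + c₂*⟪θ0-b₂, x-θ0⟫ := by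
    by_contra h
    push_neg at h
    set A := f x - f θ0 + ⟪a, x-θ0⟫ + c₁*⟪θ0-b₁, x-θ0⟫ + c₂*⟪θ0-b₂, x-θ0⟫ with hAdef
    set B := (c₁+c₂)/2*‖x-θ0‖^2 with hBdef
    have hBnn : 0 ≤ B := by positivity
    rcases eq_or_lt_of_le hBnn with hB0 | hBpos
    · have := key 1 one_pos le_rfl
      rw [← hB0] at this
      linarith
    · have ht0 : 0 < min 1 (-A/(2*B)) := by
        exact lt_min one_pos (div_pos (by linarith) (by linarith))
      have := key _ ht0 (min_le_left _ _)
      have h2 : min 1 (-A/(2*B)) * B ≤ (-A/(2*B)) * B := by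
        apply mul_le_mul_of_nonneg_right (min_le_right _ _) (le_of_lt hBpos)
      have h3 : (-A/(2*B)) * B = -A/2 := by field_simp
      linarith
  rw [inner_add_left, inner_add_left, real_inner_smul_left, real_inner_smul_left]
  linarith

lemma dual_edge {E : Type*} [NormedAddCommGroup E] [InnerProductSpace ℝ E]
    (ρ : ℝ) (hρ : 0 < ρ) (a r ls : E) :
    ⟪a + ρ•r - ls, r⟫ = (1/(2*ρ))*(‖a + ρ•r - ls‖^2 - ‖a - ls‖^2) + ρ/2*‖r‖^2 := by
  have h1 : a + ρ•r - ls = (a - ls) + ρ•r := by module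
  rw [h1, norm_add_sq_real, inner_add_left, real_inner_smul_right, real_inner_smul_left,
    norm_smul, real_inner_self_eq_norm_sq]
  simp only [Real.norm_eq_abs, mul_pow, sq_abs]
  have hne : ρ ≠ 0 := ne_of_gt hρ
  field_simp
  ring

lemma delta_edge {E : Type*} [NormedAddCommGroup E] [InnerProductSpace ℝ E]
    (ρ : ℝ) (t t' ts x : E) :
    ⟪ρ•(t' - t), ts - x⟫ = ρ/2*(‖t - ts‖^2 - ‖t' - ts‖^2 - ‖t' - t‖^2) + ⟪ρ•(t' - t), t' - x⟫ := by
  have h1 : ‖t - ts‖^2 = ‖t' - t‖^2 - 2*⟪t' - t, t' - ts⟫ + ‖t' - ts‖^2 := by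
    have h2 : t - ts = (t' - ts) - (t' - t) := by module
    rw [h2, norm_sub_sq_real, real_inner_comm]
    ring
  have h3 : ⟪ρ•(t' - t), ts - x⟫ = ρ * ⟪t' - t, ts - t'⟫ + ⟪ρ•(t' - t), t' - x⟫ := by
    rw [real_inner_smul_left, real_inner_smul_left]
    have h4 : (ts - x) = (ts - t') + (t' - x) := by module
    rw [h4, inner_add_right]
    ring
  have h5 : ⟪t' - t, ts - t'⟫ = - ⟪t' - t, t' - ts⟫ := by
    have : ts - t' = -(t' - ts) := by module
    rw [this, inner_neg_right]
  rw [h3, h5]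
  linear_combination (-ρ/2) * h1

lemma sum_if_le {E : Type*} [NormedAddCommGroup E] [InnerProductSpace ℝ E]
    (N : ℕ) (hN : 2 ≤ N) (c : ℕ → E) (u : ℕ → E) :
    ∑ n ∈ Icc 1 N, ⟪(if n ≤ N-1 then c n else 0), u n⟫ = ∑ j ∈ Icc 1 (N-1), ⟪c j, u j⟫ := by
  rw [← Finset.sum_subset (Finset.Icc_subset_Icc_right (by omega : N-1 ≤ N))
    (fun x hx hx2 => ?_)]
  · apply Finset.sum_congr rfl
    intro j hj
    rw [if_pos (Finset.mem_Icc.mp hj).2]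
  · rw [if_neg, inner_zero_left]
    simp only [Finset.mem_Icc] at hx hx2
    omega

lemma sum_if_ge {E : Type*} [NormedAddCommGroup E] [InnerProductSpace ℝ E]
    (N : ℕ) (hN : 2 ≤ N) (c : ℕ → E) (u : ℕ → E) :
    ∑ n ∈ Icc 1 N, ⟪(if 2 ≤ n then c (n-1) else 0), u n⟫
      = ∑ j ∈ Icc 1 (N-1), ⟪c j, u (j+1)⟫ := by
  rw [← Finset.sum_subset (Finset.Icc_subset_Icc_left (by omega : 1 ≤ 2))
    (fun x hx hx2 => ?_)]
  · have h2 : ∑ n ∈ Icc 2 N, ⟪(if 2 ≤ n then c (n-1) else 0), u n⟫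
        = ∑ n ∈ Icc 2 N, ⟪c (n-1), u n⟫ :=
      Finset.sum_congr rfl (fun n hn => by rw [if_pos (Finset.mem_Icc.mp hn).1])
    rw [h2]
    refine Finset.sum_nbij' (fun n => n - 1) (fun j => j + 1) ?_ ?_ ?_ ?_ ?_
    all_goals intro a ha; simp only [Finset.mem_Icc] at *
    · omega
    · omega
    · omega
    · omega
    · congr 2
      omega
  · rw [if_neg, inner_zero_left]
    simp only [Finset.mem_Icc] at hx hx2
    omega

lemma sum_shift {E : Type*} [NormedAddCommGroup E] [InnerProductSpace ℝ E]
    (N : ℕ) (hN : 2 ≤ N) (w u : ℕ → E) :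
    ∑ n ∈ Icc 1 N, ⟪(if n ≤ N-1 then w n else 0) - (if 2 ≤ n then w (n-1) else 0), u n⟫
      = ∑ j ∈ Icc 1 (N-1), ⟪w j, u j - u (j+1)⟫ := by
  have h1 : ∀ n, ⟪(if n ≤ N-1 then w n else 0) - (if 2 ≤ n then w (n-1) else 0), u n⟫
      = ⟪(if n ≤ N-1 then w n else 0), u n⟫ - ⟪(if 2 ≤ n then w (n-1) else 0), u n⟫ :=
    fun n => inner_sub_left _ _ _
  simp only [h1]
  rw [Finset.sum_sub_distrib, sum_if_le N hN w u, sum_if_ge N hN w u, ← Finset.sum_sub_distrib]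
  exact Finset.sum_congr rfl (fun j hj => (inner_sub_right _ _ _).symm)

lemma filter_odd_eq {N : ℕ} (hN : 2 ≤ N) (hNe : Even N) :
    (Icc 1 N).filter (fun n => Odd n) = (Icc 1 (N-1)).filter (fun n => Odd n) := by
  ext m
  simp only [Finset.mem_filter, Finset.mem_Icc, Nat.odd_iff]
  rw [Nat.even_iff] at hNe
  omega

lemma sum_parity {E : Type*} [NormedAddCommGroup E] [InnerProductSpace ℝ E]
    (N : ℕ) (hN : 2 ≤ N) (hNe : Even N) (d u : ℕ → E) :
    ∑ n ∈ Icc 1 N, ⟪(if Odd n then (if n = 1 then d 2 else d (n-1) + d (n+1)) else 0), u n⟫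
      = ∑ j ∈ Icc 1 (N-1), ⟪d (ee j), u (oo j)⟫ := by
  have hsplit : ∀ n, ⟪(if Odd n then (if n = 1 then d 2 else d (n-1) + d (n+1)) else 0), u n⟫
      = (if Odd n then ⟪d (n+1), u n⟫ else 0)
        + (if Odd n ∧ n ≠ 1 then ⟪d (n-1), u n⟫ else 0) := by
    intro n
    by_cases h : Odd n
    · by_cases h1 : n = 1
      · subst h1
        simp [h]
      · simp [h, h1, inner_add_left]
        ring
    · simp [h]
  simp only [hsplit]
  rw [Finset.sum_add_distrib, ← Finset.sum_filter, ← Finset.sum_filter,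
    ← Finset.sum_filter_add_sum_filter_not (Icc 1 (N-1)) (fun j => Odd j)]
  congr 1
  · rw [filter_odd_eq hN hNe]
    apply Finset.sum_congr rfl
    intro j hj
    simp only [Finset.mem_filter] at hj
    rw [ee, oo, if_pos hj.2, if_pos hj.2]
  · rw [Nat.even_iff] at hNe
    refine Finset.sum_nbij' (fun n => n - 1) (fun j => j + 1) ?_ ?_ ?_ ?_ ?_
    · intro a ha
      simp only [Finset.mem_filter, Finset.mem_Icc, Nat.odd_iff, Nat.not_odd_iff_even,
        Nat.even_iff] at ha ⊢
      omega
    · intro a ha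
      simp only [Finset.mem_filter, Finset.mem_Icc, Nat.odd_iff, Nat.not_odd_iff_even,
        Nat.even_iff] at ha ⊢
      omega
    · intro a ha
      simp only [Finset.mem_filter, Finset.mem_Icc, Nat.odd_iff] at ha
      show a - 1 + 1 = a
      omega
    · intro a ha
      simp only [Finset.mem_filter, Finset.mem_Icc, Nat.odd_iff, Nat.not_odd_iff_even,
        Nat.even_iff] at ha
      show a + 1 - 1 = a
      omega
    · intro a ha
      simp only [Finset.mem_filter, Finset.mem_Icc, Nat.odd_iff] at ha
      have he : ¬ Odd (a-1) := by rw [Nat.odd_iff]; omega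
      rw [ee, oo, if_neg he, if_neg he, show a-1+1 = a by omega]

lemma sum_cross {E : Type*} [NormedAddCommGroup E] [InnerProductSpace ℝ E]
    (N : ℕ) (hN : 2 ≤ N) (hNe : Even N) (d w : ℕ → E) :
    ∑ j ∈ Icc 1 (N-1), ⟪d (ee j), w (ee j) - w (oo j)⟫
      = ∑ m ∈ (Icc 2 N).filter (fun m => ¬ Odd m),
          ⟪d m, (if m ≤ N-1 then w m - w (m+1) else 0) - (w (m-1) - w m)⟫ := by
  rw [Nat.even_iff] at hNe
  have hT : ∀ m ∈ (Icc 2 N).filter (fun m => ¬ Odd m),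
      ⟪d m, (if m ≤ N-1 then w m - w (m+1) else 0) - (w (m-1) - w m)⟫
      = ⟪d m, (if m ≤ N-1 then w m - w (m+1) else 0)⟫ + ⟪d m, w m - w (m-1)⟫ := by
    intro m _
    rw [sub_eq_add_neg, neg_sub, inner_add_right]
  rw [Finset.sum_congr rfl hT, Finset.sum_add_distrib,
    ← Finset.sum_filter_add_sum_filter_not (Icc 1 (N-1)) (fun j => Odd j)]
  have h1 : ∑ j ∈ (Icc 1 (N-1)).filter (fun j => Odd j), ⟪d (ee j), w (ee j) - w (oo j)⟫
      = ∑ m ∈ (Icc 2 N).filter (fun m => ¬ Odd m), ⟪d m, w m - w (m-1)⟫ := by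
    refine Finset.sum_nbij' (fun j => j + 1) (fun m => m - 1) ?_ ?_ ?_ ?_ ?_
    · intro a ha
      simp only [Finset.mem_filter, Finset.mem_Icc, Nat.odd_iff] at ha ⊢
      omega
    · intro a ha
      simp only [Finset.mem_filter, Finset.mem_Icc, Nat.odd_iff] at ha ⊢
      omega
    · intro a ha
      show a + 1 - 1 = a
      omega
    · intro a ha
      simp only [Finset.mem_filter, Finset.mem_Icc, Nat.odd_iff] at ha
      show a - 1 + 1 = a
      omega
    · intro a ha
      simp only [Finset.mem_filter] at ha
      rw [ee, oo, if_pos ha.2, if_pos ha.2, show a + 1 - 1 = a by omega]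
  have h2 : ∑ j ∈ (Icc 1 (N-1)).filter (fun j => ¬ Odd j), ⟪d (ee j), w (ee j) - w (oo j)⟫
      = ∑ m ∈ (Icc 2 N).filter (fun m => ¬ Odd m),
          ⟪d m, (if m ≤ N-1 then w m - w (m+1) else 0)⟫ := by
    have hc : ∀ j ∈ (Icc 1 (N-1)).filter (fun j => ¬ Odd j),
        ⟪d (ee j), w (ee j) - w (oo j)⟫ = ⟪d j, (if j ≤ N-1 then w j - w (j+1) else 0)⟫ := by
      intro j hj
      simp only [Finset.mem_filter, Finset.mem_Icc] at hj
      rw [ee, oo, if_neg hj.2, if_neg hj.2, if_pos hj.1.2]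
    rw [Finset.sum_congr rfl hc]
    apply Finset.sum_subset
    · intro x hx
      simp only [Finset.mem_filter, Finset.mem_Icc, Nat.odd_iff] at hx ⊢
      omega
    · intro x hx hx2
      simp only [Finset.mem_filter, Finset.mem_Icc, Nat.odd_iff] at hx hx2
      rw [if_neg (by omega), inner_zero_right]
  rw [h1, h2, add_comm]

noncomputable def gvec {E : Type*} [NormedAddCommGroup E] [InnerProductSpace ℝ E]
    (N : ℕ) (ρ : ℝ) (θ lam : ℕ → ℕ → E) (k n : ℕ) : E :=
  (if n ≤ N-1 then lam (k+1) n else 0) - (if 2 ≤ n then lam (k+1) (n-1) else 0)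
    + (if Odd n then (if n = 1 then ρ•(θ (k+1) 2 - θ k 2)
        else ρ•(θ (k+1) (n-1) - θ k (n-1)) + ρ•(θ (k+1) (n+1) - θ k (n+1))) else 0)

lemma gadmm_lin {E : Type*} [NormedAddCommGroup E] [InnerProductSpace ℝ E]
    (N : ℕ) (hN : 2 ≤ N) (hNeven : Even N)
    (f : ℕ → E → ℝ) (hconv : ∀ n, ConvexOn ℝ Set.univ (f n))
    (ρ : ℝ) (hρ : 0 < ρ)
    (θ lam : ℕ → ℕ → E)
    (hHead : ∀ k n, Odd n → 1 < n → n ≤ N → ∀ x : E,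
      f n (θ (k+1) n) + ⟪lam k (n-1), θ k (n-1) - θ (k+1) n⟫
        + ⟪lam k n, θ (k+1) n - θ k (n+1)⟫
        + ρ/2 * ‖θ k (n-1) - θ (k+1) n‖^2 + ρ/2 * ‖θ (k+1) n - θ k (n+1)‖^2
      ≤ f n x + ⟪lam k (n-1), θ k (n-1) - x⟫ + ⟪lam k n, x - θ k (n+1)⟫
        + ρ/2 * ‖θ k (n-1) - x‖^2 + ρ/2 * ‖x - θ k (n+1)‖^2)
    (hHead1 : ∀ k, ∀ x : E,
      f 1 (θ (k+1) 1) + ⟪lam k 1, θ (k+1) 1 - θ k 2⟫ + ρ/2 * ‖θ (k+1) 1 - θ k 2‖^2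
      ≤ f 1 x + ⟪lam k 1, x - θ k 2⟫ + ρ/2 * ‖x - θ k 2‖^2)
    (hTail : ∀ k n, Even n → 0 < n → n < N → ∀ x : E,
      f n (θ (k+1) n) + ⟪lam k (n-1), θ (k+1) (n-1) - θ (k+1) n⟫
        + ⟪lam k n, θ (k+1) n - θ (k+1) (n+1)⟫
        + ρ/2 * ‖θ (k+1) (n-1) - θ (k+1) n‖^2 + ρ/2 * ‖θ (k+1) n - θ (k+1) (n+1)‖^2
      ≤ f n x + ⟪lam k (n-1), θ (k+1) (n-1) - x⟫ + ⟪lam k n, x - θ (k+1) (n+1)⟫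
        + ρ/2 * ‖θ (k+1) (n-1) - x‖^2 + ρ/2 * ‖x - θ (k+1) (n+1)‖^2)
    (hTailN : ∀ k, ∀ x : E,
      f N (θ (k+1) N) + ⟪lam k (N-1), θ (k+1) (N-1) - θ (k+1) N⟫
        + ρ/2 * ‖θ (k+1) (N-1) - θ (k+1) N‖^2
      ≤ f N x + ⟪lam k (N-1), θ (k+1) (N-1) - x⟫ + ρ/2 * ‖θ (k+1) (N-1) - x‖^2)
    (hDual : ∀ k n, 1 ≤ n → n ≤ N - 1 →
      lam (k+1) n = lam k n + ρ • (θ (k+1) n - θ (k+1) (n+1))) :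
    ∀ k m, 1 ≤ m → m ≤ N → ∀ x : E,
      f m (θ (k+1) m) ≤ f m x + ⟪gvec N ρ θ lam k m, x - θ (k+1) m⟫ := by
  intro k m hm1 hmN x
  rcases Nat.even_or_odd m with he | ho
  · -- even m
    have hm2 : 2 ≤ m := by
      rcases he with ⟨t, ht⟩; omega
    by_cases hmNeq : m = N
    · -- m = N
      have hopt : ∀ y : E, f m (θ (k+1) m) + ⟪-lam k (m-1), θ (k+1) m⟫
          + ρ/2*‖θ (k+1) m - θ (k+1) (m-1)‖^2 + 0/2*‖θ (k+1) m - 0‖^2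
          ≤ f m y + ⟪-lam k (m-1), y⟫ + ρ/2*‖y - θ (k+1) (m-1)‖^2 + 0/2*‖y - 0‖^2 := by
        intro y
        have h := hTailN k y
        rw [← hmNeq] at h
        rw [norm_sub_rev (θ (k+1) (m-1)) (θ (k+1) m), norm_sub_rev (θ (k+1) (m-1)) y] at h
        simp only [inner_sub_right, inner_neg_left] at h ⊢
        linarith
      have hlin := lin_opt (f m) (hconv m) (-lam k (m-1)) (θ (k+1) (m-1)) 0 (θ (k+1) m)
        ρ 0 (le_of_lt hρ) le_rfl hopt x
      have hd := hDual k (m-1) (by omega) (by omega)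
      rw [show m-1+1 = m from by omega] at hd
      have hg : gvec N ρ θ lam k m
          = -lam k (m-1) + ρ•(θ (k+1) m - θ (k+1) (m-1)) + (0:ℝ)•(θ (k+1) m - 0) := by
        unfold gvec
        rw [if_neg (by omega : ¬ m ≤ N-1), if_pos hm2,
          if_neg (by rw [Nat.odd_iff]; rw [Nat.even_iff] at he; omega), hd]
        module
      rw [hg]
      exact hlin
    · -- even m < N
      have hmN' : m < N := by omega
      have hopt : ∀ y : E, f m (θ (k+1) m) + ⟪lam k m - lam k (m-1), θ (k+1) m⟫
          + ρ/2*‖θ (k+1) m - θ (k+1) (m-1)‖^2 + ρ/2*‖θ (k+1) m - θ (k+1) (m+1)‖^2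
          ≤ f m y + ⟪lam k m - lam k (m-1), y⟫
          + ρ/2*‖y - θ (k+1) (m-1)‖^2 + ρ/2*‖y - θ (k+1) (m+1)‖^2 := by
        intro y
        have h := hTail k m he (by omega) hmN' y
        rw [norm_sub_rev (θ (k+1) (m-1)) (θ (k+1) m), norm_sub_rev (θ (k+1) (m-1)) y] at h
        simp only [inner_sub_right, inner_sub_left] at h ⊢
        linarith
      have hlin := lin_opt (f m) (hconv m) (lam k m - lam k (m-1))
        (θ (k+1) (m-1)) (θ (k+1) (m+1)) (θ (k+1) m) ρ ρ (le_of_lt hρ) (le_of_lt hρ) hopt x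
      have hd1 := hDual k (m-1) (by omega) (by omega)
      rw [show m-1+1 = m from by omega] at hd1
      have hd2 := hDual k m (by omega) (by omega)
      have hg : gvec N ρ θ lam k m = (lam k m - lam k (m-1))
          + ρ•(θ (k+1) m - θ (k+1) (m-1)) + ρ•(θ (k+1) m - θ (k+1) (m+1)) := by
        unfold gvec
        rw [if_pos (by omega : m ≤ N-1), if_pos hm2,
          if_neg (by rw [Nat.odd_iff]; rw [Nat.even_iff] at he; omega), hd1, hd2]
        module
      rw [hg]
      exact hlin
  · -- odd m
    have hmN' : m ≤ N - 1 := by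
      rw [Nat.odd_iff] at ho; rw [Nat.even_iff] at hNeven; omega
    by_cases hm1eq : m = 1
    · subst hm1eq
      have hopt : ∀ y : E, f 1 (θ (k+1) 1) + ⟪lam k 1, θ (k+1) 1⟫
          + ρ/2*‖θ (k+1) 1 - θ k 2‖^2 + 0/2*‖θ (k+1) 1 - 0‖^2
          ≤ f 1 y + ⟪lam k 1, y⟫ + ρ/2*‖y - θ k 2‖^2 + 0/2*‖y - 0‖^2 := by
        intro y
        have h := hHead1 k y
        simp only [inner_sub_right] at h ⊢
        linarith
      have hlin := lin_opt (f 1) (hconv 1) (lam k 1) (θ k 2) 0 (θ (k+1) 1)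
        ρ 0 (le_of_lt hρ) le_rfl hopt x
      have hd := hDual k 1 le_rfl (by omega)
      have hg : gvec N ρ θ lam k 1
          = lam k 1 + ρ•(θ (k+1) 1 - θ k 2) + (0:ℝ)•(θ (k+1) 1 - 0) := by
        unfold gvec
        rw [if_pos (by omega : 1 ≤ N-1), if_neg (by omega : ¬ 2 ≤ 1), if_pos (by norm_num : Odd 1),
          if_pos rfl, hd]
        norm_num
        module
      rw [hg]
      exact hlin
    · have hm2 : 2 ≤ m := by omega
      have hopt : ∀ y : E, f m (θ (k+1) m) + ⟪lam k m - lam k (m-1), θ (k+1) m⟫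
          + ρ/2*‖θ (k+1) m - θ k (m-1)‖^2 + ρ/2*‖θ (k+1) m - θ k (m+1)‖^2
          ≤ f m y + ⟪lam k m - lam k (m-1), y⟫
          + ρ/2*‖y - θ k (m-1)‖^2 + ρ/2*‖y - θ k (m+1)‖^2 := by
        intro y
        have h := hHead k m ho (by omega) hmN y
        rw [norm_sub_rev (θ k (m-1)) (θ (k+1) m), norm_sub_rev (θ k (m-1)) y] at h
        simp only [inner_sub_right, inner_sub_left] at h ⊢
        linarith
      have hlin := lin_opt (f m) (hconv m) (lam k m - lam k (m-1))
        (θ k (m-1)) (θ k (m+1)) (θ (k+1) m) ρ ρ (le_of_lt hρ) (le_of_lt hρ) hopt x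
      have hd1 := hDual k (m-1) (by omega) (by omega)
      rw [show m-1+1 = m from by omega] at hd1
      have hd2 := hDual k m (by omega) hmN'
      have hg : gvec N ρ θ lam k m = (lam k m - lam k (m-1))
          + ρ•(θ (k+1) m - θ k (m-1)) + ρ•(θ (k+1) m - θ k (m+1)) := by
        unfold gvec
        rw [if_pos hmN', if_pos hm2, if_pos ho, if_neg hm1eq, hd1, hd2]
        module
      rw [hg]
      exact hlin

noncomputable def Vfun {E : Type*} [NormedAddCommGroup E] [InnerProductSpace ℝ E]
    (N : ℕ) (ρ : ℝ) (θstar : E) (lamstar : ℕ → E) (θ lam : ℕ → ℕ → E) (k : ℕ) : ℝ :=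
  ∑ j ∈ Finset.Icc 1 (N-1), ((1/ρ)*‖lam k j - lamstar j‖^2 + ρ*‖θ k (ee j) - θstar‖^2)

lemma descent {E : Type*} [NormedAddCommGroup E] [InnerProductSpace ℝ E]
    (N : ℕ) (hN : 2 ≤ N) (hNeven : Even N)
    (f : ℕ → E → ℝ)
    (ρ : ℝ) (hρ : 0 < ρ)
    (θ lam : ℕ → ℕ → E)
    (hDual : ∀ k n, 1 ≤ n → n ≤ N - 1 →
      lam (k+1) n = lam k n + ρ • (θ (k+1) n - θ (k+1) (n+1)))
    (θstar : E) (lamstar : ℕ → E)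
    (hsaddle : ∀ (th la : ℕ → E),
      L0 N f (fun _ => θstar) la ≤ L0 N f (fun _ => θstar) lamstar ∧
      L0 N f (fun _ => θstar) lamstar ≤ L0 N f th lamstar)
    (hC : ∀ k m, 1 ≤ m → m ≤ N → ∀ x : E,
      f m (θ (k+1) m) ≤ f m x + ⟪gvec N ρ θ lam k m, x - θ (k+1) m⟫) :
    ∀ k, Vfun N ρ θstar lamstar θ lam (k+1) - Vfun N ρ θstar lamstar θ lam k
      + ρ * ∑ j ∈ Icc 1 (N-1),
          (‖θ (k+1) j - θ (k+1) (j+1)‖^2 + ‖θ (k+1) (ee j) - θ k (ee j)‖^2)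
      ≤ 2 * ∑ j ∈ Icc 1 (N-1),
          ⟪ρ•(θ (k+1) (ee j) - θ k (ee j)), θ (k+1) (ee j) - θ (k+1) (oo j)⟫ := by
  intro k
  -- step 1: summed linearized optimality at θstar
  have hsum1 : ∑ n ∈ Icc 1 N, f n (θ (k+1) n)
      ≤ ∑ n ∈ Icc 1 N, f n θstar
        + ∑ n ∈ Icc 1 N, ⟪gvec N ρ θ lam k n, θstar - θ (k+1) n⟫ := by
    rw [← Finset.sum_add_distrib]
    apply Finset.sum_le_sum
    intro n hn
    obtain ⟨h1, h2⟩ := Finset.mem_Icc.mp hn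
    exact hC k n h1 h2 θstar
  -- step 2: saddle point inequality
  have hsad := (hsaddle (fun n => θ (k+1) n) lamstar).2
  simp only [L0, sub_self, inner_zero_right, Finset.sum_const_zero, add_zero] at hsad
  -- step 3: combine
  have hF : 0 ≤ ∑ j ∈ Icc 1 (N-1), ⟪lamstar j, θ (k+1) j - θ (k+1) (j+1)⟫
      + ∑ n ∈ Icc 1 N, ⟪gvec N ρ θ lam k n, θstar - θ (k+1) n⟫ := by linarith
  -- step 4: decompose the gvec sum
  have hsplit : ∀ n ∈ Icc 1 N, ⟪gvec N ρ θ lam k n, θstar - θ (k+1) n⟫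
      = ⟪(if n ≤ N-1 then lam (k+1) n else 0) - (if 2 ≤ n then lam (k+1) (n-1) else 0),
          θstar - θ (k+1) n⟫
        + ⟪(if Odd n then (if n = 1 then ρ•(θ (k+1) 2 - θ k 2)
            else ρ•(θ (k+1) (n-1) - θ k (n-1)) + ρ•(θ (k+1) (n+1) - θ k (n+1))) else 0),
          θstar - θ (k+1) n⟫ := by
    intro n _
    unfold gvec
    rw [inner_add_left]
  rw [Finset.sum_congr rfl hsplit, Finset.sum_add_distrib] at hF
  have hS1 := sum_shift N hN (lam (k+1)) (fun n => θstar - θ (k+1) n)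
  have hS2 := sum_parity N hN hNeven (fun m => ρ•(θ (k+1) m - θ k m))
    (fun n => θstar - θ (k+1) n)
  rw [hS1, hS2] at hF
  have hS1' : ∀ j ∈ Icc 1 (N-1),
      ⟪lam (k+1) j, (θstar - θ (k+1) j) - (θstar - θ (k+1) (j+1))⟫
      = -⟪lam (k+1) j, θ (k+1) j - θ (k+1) (j+1)⟫ := by
    intro j _
    rw [show (θstar - θ (k+1) j) - (θstar - θ (k+1) (j+1))
        = -(θ (k+1) j - θ (k+1) (j+1)) from by module, inner_neg_right]
  rw [Finset.sum_congr rfl hS1', Finset.sum_neg_distrib] at hF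
  -- step 5: hI'
  have hI : ∑ j ∈ Icc 1 (N-1), ⟪lam (k+1) j - lamstar j, θ (k+1) j - θ (k+1) (j+1)⟫
      ≤ ∑ j ∈ Icc 1 (N-1), ⟪ρ•(θ (k+1) (ee j) - θ k (ee j)), θstar - θ (k+1) (oo j)⟫ := by
    have hc : ∀ j ∈ Icc 1 (N-1),
        ⟪lam (k+1) j - lamstar j, θ (k+1) j - θ (k+1) (j+1)⟫
        = ⟪lam (k+1) j, θ (k+1) j - θ (k+1) (j+1)⟫
          - ⟪lamstar j, θ (k+1) j - θ (k+1) (j+1)⟫ :=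
      fun j _ => inner_sub_left _ _ _
    rw [Finset.sum_congr rfl hc, Finset.sum_sub_distrib]
    linarith
  -- step 6: per-edge identity
  have hpoint : ∀ j ∈ Icc 1 (N-1),
      2*(⟪lam (k+1) j - lamstar j, θ (k+1) j - θ (k+1) (j+1)⟫
        - ⟪ρ•(θ (k+1) (ee j) - θ k (ee j)), θstar - θ (k+1) (oo j)⟫)
      = (((1/ρ)*‖lam (k+1) j - lamstar j‖^2 + ρ*‖θ (k+1) (ee j) - θstar‖^2)
          - ((1/ρ)*‖lam k j - lamstar j‖^2 + ρ*‖θ k (ee j) - θstar‖^2))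
        + ρ*(‖θ (k+1) j - θ (k+1) (j+1)‖^2 + ‖θ (k+1) (ee j) - θ k (ee j)‖^2)
        - 2*⟪ρ•(θ (k+1) (ee j) - θ k (ee j)), θ (k+1) (ee j) - θ (k+1) (oo j)⟫ := by
    intro j hj
    obtain ⟨hj1, hj2⟩ := Finset.mem_Icc.mp hj
    have hd := hDual k j hj1 hj2
    rw [hd, dual_edge ρ hρ (lam k j) (θ (k+1) j - θ (k+1) (j+1)) (lamstar j),
      delta_edge ρ (θ k (ee j)) (θ (k+1) (ee j)) θstar (θ (k+1) (oo j))]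
    field_simp
    ring
  have hsum2 := Finset.sum_congr rfl hpoint
  rw [← Finset.mul_sum, Finset.sum_sub_distrib] at hsum2
  -- step 7: rewrite RHS sum as the V-expression
  have e1 : (Vfun N ρ θstar lamstar θ lam (k+1) - Vfun N ρ θstar lamstar θ lam k)
      + ρ * ∑ j ∈ Icc 1 (N-1),
          (‖θ (k+1) j - θ (k+1) (j+1)‖^2 + ‖θ (k+1) (ee j) - θ k (ee j)‖^2)
      - 2 * ∑ j ∈ Icc 1 (N-1),
          ⟪ρ•(θ (k+1) (ee j) - θ k (ee j)), θ (k+1) (ee j) - θ (k+1) (oo j)⟫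
      = ∑ j ∈ Icc 1 (N-1),
        ((((1/ρ)*‖lam (k+1) j - lamstar j‖^2 + ρ*‖θ (k+1) (ee j) - θstar‖^2)
          - ((1/ρ)*‖lam k j - lamstar j‖^2 + ρ*‖θ k (ee j) - θstar‖^2))
        + ρ*(‖θ (k+1) j - θ (k+1) (j+1)‖^2 + ‖θ (k+1) (ee j) - θ k (ee j)‖^2)
        - 2*⟪ρ•(θ (k+1) (ee j) - θ k (ee j)), θ (k+1) (ee j) - θ (k+1) (oo j)⟫) := by
    unfold Vfun
    rw [Finset.mul_sum, Finset.mul_sum, ← Finset.sum_sub_distrib, ← Finset.sum_add_distrib,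
      ← Finset.sum_sub_distrib]
  linarith [hsum2, hI, e1]

lemma cross_nonpos {E : Type*} [NormedAddCommGroup E] [InnerProductSpace ℝ E]
    (N : ℕ) (hN : 2 ≤ N) (hNeven : Even N)
    (f : ℕ → E → ℝ)
    (ρ : ℝ) (hρ : 0 < ρ)
    (θ lam : ℕ → ℕ → E)
    (hDual : ∀ k n, 1 ≤ n → n ≤ N - 1 →
      lam (k+1) n = lam k n + ρ • (θ (k+1) n - θ (k+1) (n+1)))
    (hC : ∀ k m, 1 ≤ m → m ≤ N → ∀ x : E,
      f m (θ (k+1) m) ≤ f m x + ⟪gvec N ρ θ lam k m, x - θ (k+1) m⟫) :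
    ∀ k, ∑ j ∈ Icc 1 (N-1),
        ⟪ρ•(θ (k+2) (ee j) - θ (k+1) (ee j)), θ (k+2) (ee j) - θ (k+2) (oo j)⟫ ≤ 0 := by
  intro k
  rw [sum_cross N hN hNeven (fun m => ρ•(θ (k+2) m - θ (k+1) m)) (θ (k+2))]
  apply Finset.sum_nonpos
  intro m hm
  simp only [Finset.mem_filter, Finset.mem_Icc] at hm
  obtain ⟨⟨hm2, hmN⟩, hodd⟩ := hm
  have h1 := hC (k+1) m (by omega) hmN (θ (k+1) m)
  have h2 := hC k m (by omega) hmN (θ (k+2) m)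
  have hmono : ⟪gvec N ρ θ lam (k+1) m - gvec N ρ θ lam k m, θ (k+2) m - θ (k+1) m⟫ ≤ 0 := by
    have e1 : ⟪gvec N ρ θ lam (k+1) m, θ (k+1) m - θ (k+2) m⟫
        = -⟪gvec N ρ θ lam (k+1) m, θ (k+2) m - θ (k+1) m⟫ := by
      rw [show θ (k+1) m - θ (k+2) m = -(θ (k+2) m - θ (k+1) m) from by module, inner_neg_right]
    have : (k+1+1) = k+2 := rfl
    rw [this] at h1 h2
    rw [e1] at h1
    rw [inner_sub_left]
    linarith
  -- compute the gvec difference for even m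
  have hd1 := hDual (k+1) (m-1) (by omega) (by omega)
  rw [show m-1+1 = m from by omega] at hd1
  have hgdiff : gvec N ρ θ lam (k+1) m - gvec N ρ θ lam k m
      = (if m ≤ N-1 then ρ•(θ (k+2) m - θ (k+2) (m+1)) else 0)
        - ρ•(θ (k+2) (m-1) - θ (k+2) m) := by
    unfold gvec
    rw [if_neg hodd, if_neg hodd, if_pos hm2, if_pos hm2]
    by_cases hle : m ≤ N-1
    · have hd2 := hDual (k+1) m (by omega) hle
      rw [if_pos hle, if_pos hle, if_pos hle, hd1, hd2]
      module
    · rw [if_neg hle, if_neg hle, if_neg hle, hd1]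
      module
  rw [hgdiff] at hmono
  by_cases hle : m ≤ N-1
  · rw [if_pos hle] at hmono ⊢
    rw [inner_sub_left, real_inner_smul_left, real_inner_smul_left] at hmono
    rw [inner_sub_right, real_inner_smul_left, real_inner_smul_left,
      real_inner_comm (θ (k+2) m - θ (k+2) (m+1)) (θ (k+2) m - θ (k+1) m),
      real_inner_comm (θ (k+2) (m-1) - θ (k+2) m) (θ (k+2) m - θ (k+1) m)]
    linarith
  · rw [if_neg hle] at hmono ⊢
    rw [zero_sub, inner_neg_left] at hmono
    rw [zero_sub, inner_neg_right, real_inner_smul_left]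
    rw [real_inner_smul_left] at hmono
    rw [real_inner_comm]
    linarith

theorem gadmm_final {E : Type*} [NormedAddCommGroup E] [InnerProductSpace ℝ E]
    (N : ℕ) (ρ : ℝ) (θstar : E) (lamstar : ℕ → E) (θ lam : ℕ → ℕ → E) (hN : 2 ≤ N) (hNeven : Even N) (hρ : 0 < ρ)
    (hDesc : ∀ k, Vfun N ρ θstar lamstar θ lam (k+1) - Vfun N ρ θstar lamstar θ lam k
      + ρ * ∑ j ∈ Icc 1 (N-1),
          (‖θ (k+1) j - θ (k+1) (j+1)‖^2 + ‖θ (k+1) (ee j) - θ k (ee j)‖^2)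
      ≤ 2 * ∑ j ∈ Icc 1 (N-1),
          ⟪ρ•(θ (k+1) (ee j) - θ k (ee j)), θ (k+1) (ee j) - θ (k+1) (oo j)⟫)
    (hCross : ∀ k, ∑ j ∈ Icc 1 (N-1),
        ⟪ρ•(θ (k+2) (ee j) - θ (k+1) (ee j)), θ (k+2) (ee j) - θ (k+2) (oo j)⟫ ≤ 0) :
    ∀ n, Odd n → n ≤ N →
      Tendsto (fun k =>
          if n = 1 then ρ • (θ (k+1) 2 - θ k 2)
          else ρ • (θ (k+1) (n-1) - θ k (n-1)) + ρ • (θ (k+1) (n+1) - θ k (n+1)))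
        atTop (𝓝 (0 : E)) := by
  set W : ℕ → ℝ := fun k => Vfun N ρ θstar lamstar θ lam (k+1) with hW
  set D : ℕ → ℝ := fun k => ρ * ∑ j ∈ Icc 1 (N-1),
      (‖θ (k+2) j - θ (k+2) (j+1)‖^2 + ‖θ (k+2) (ee j) - θ (k+1) (ee j)‖^2) with hD
  have hstep : ∀ k, W (k+1) + D k ≤ W k := by
    intro k
    have h1 := hDesc (k+1)
    have h2 := hCross k
    simp only [show k+1+1 = k+2 from rfl] at h1
    simp only [hW, hD]
    linarith
  have hW0 : ∀ k, 0 ≤ W k := by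
    intro k
    apply Finset.sum_nonneg
    intro j _
    positivity
  have hD0 : ∀ k, 0 ≤ D k := by
    intro k
    apply mul_nonneg hρ.le
    apply Finset.sum_nonneg
    intro j _
    positivity
  have hWanti : Antitone W := antitone_nat_of_succ_le (fun k => by linarith [hstep k, hD0 k])
  have hWbdd : BddBelow (Set.range W) := by
    refine ⟨0, fun x hx => ?_⟩
    obtain ⟨k, rfl⟩ := hx
    exact hW0 k
  have hWconv : Tendsto W atTop (𝓝 (⨅ k, W k)) := tendsto_atTop_ciInf hWanti hWbdd
  have hWconv' : Tendsto (fun k => W (k+1)) atTop (𝓝 (⨅ k, W k)) :=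
    hWconv.comp (tendsto_add_atTop_nat 1)
  have hdiff : Tendsto (fun k => W k - W (k+1)) atTop (𝓝 0) := by
    have := hWconv.sub hWconv'
    simpa using this
  have hDto : Tendsto D atTop (𝓝 0) :=
    squeeze_zero hD0 (fun k => by linarith [hstep k]) hdiff
  have hDelta : ∀ m, ¬ Odd m → 2 ≤ m → m ≤ N →
      Tendsto (fun k => θ (k+1) m - θ k m) atTop (𝓝 (0:E)) := by
    intro m hodd hm2 hmN
    have hee : ee (m-1) = m := by
      unfold ee
      rw [if_pos (by rw [Nat.odd_iff] at hodd ⊢; omega)]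
      omega
    have hedge : m - 1 ∈ Icc 1 (N-1) := by
      rw [Nat.even_iff] at hNeven
      rw [Nat.odd_iff] at hodd
      simp only [Finset.mem_Icc]
      omega
    have hbound : ∀ k, ‖θ (k+2) m - θ (k+1) m‖^2 * ρ ≤ D k := by
      intro k
      have hs := Finset.single_le_sum
        (f := fun j => ‖θ (k+2) j - θ (k+2) (j+1)‖^2 + ‖θ (k+2) (ee j) - θ (k+1) (ee j)‖^2)
        (fun j _ => by positivity) hedge
      simp only [hee] at hs
      have hr : (0:ℝ) ≤ ‖θ (k+2) (m-1) - θ (k+2) (m-1+1)‖^2 := by positivity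
      rw [hD]
      calc ‖θ (k+2) m - θ (k+1) m‖^2 * ρ = ρ * ‖θ (k+2) m - θ (k+1) m‖^2 := by ring
        _ ≤ ρ * ∑ j ∈ Icc 1 (N-1),
            (‖θ (k+2) j - θ (k+2) (j+1)‖^2 + ‖θ (k+2) (ee j) - θ (k+1) (ee j)‖^2) := by
          apply mul_le_mul_of_nonneg_left _ hρ.le
          linarith
    have hsq : Tendsto (fun k => ‖θ (k+2) m - θ (k+1) m‖^2) atTop (𝓝 0) := by
      apply squeeze_zero (fun k => by positivity) (fun k => (le_div_iff₀ hρ).mpr (hbound k))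
      simpa using hDto.div_const ρ
    have hnorm : Tendsto (fun k => ‖θ (k+2) m - θ (k+1) m‖) atTop (𝓝 0) := by
      have h := (Real.continuous_sqrt.tendsto 0).comp hsq
      simp only [Function.comp_def, Real.sqrt_sq (norm_nonneg _), Real.sqrt_zero] at h
      exact h
    have hvec : Tendsto (fun k => θ (k+2) m - θ (k+1) m) atTop (𝓝 (0:E)) :=
      tendsto_zero_iff_norm_tendsto_zero.mpr hnorm
    exact (tendsto_add_atTop_iff_nat 1).mp hvec
  intro n hodd hnN
  by_cases h1 : n = 1
  · subst h1
    simp only [if_pos rfl]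
    have h2 : ¬ Odd 2 := by decide
    have := (hDelta 2 h2 le_rfl hN).const_smul ρ
    simpa using this
  · simp only [if_neg h1]
    rw [Nat.odd_iff] at hodd
    rw [Nat.even_iff] at hNeven
    have t1 := (hDelta (n-1) (by rw [Nat.odd_iff]; omega) (by omega) (by omega)).const_smul ρ
    have t2 := (hDelta (n+1) (by rw [Nat.odd_iff]; omega) (by omega) (by omega)).const_smul ρ
    have := t1.add t2
    simpa using this

theorem gadmm_dual_residual_tendsto_zero
    {E : Type*} [NormedAddCommGroup E] [InnerProductSpace ℝ E] [FiniteDimensional ℝ E]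
    (N : ℕ) (hN : 2 ≤ N) (hNeven : Even N)
    (f : ℕ → E → ℝ) (hconv : ∀ n, ConvexOn ℝ Set.univ (f n))
    (ρ : ℝ) (hρ : 0 < ρ)
    (θ lam : ℕ → ℕ → E)
    -- (a) head updates: interior odd workers 1 < n ≤ N
    (hHead : ∀ k n, Odd n → 1 < n → n ≤ N → ∀ x : E,
      f n (θ (k+1) n) + ⟪lam k (n-1), θ k (n-1) - θ (k+1) n⟫
        + ⟪lam k n, θ (k+1) n - θ k (n+1)⟫
        + ρ/2 * ‖θ k (n-1) - θ (k+1) n‖^2 + ρ/2 * ‖θ (k+1) n - θ k (n+1)‖^2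
      ≤ f n x + ⟪lam k (n-1), θ k (n-1) - x⟫ + ⟪lam k n, x - θ k (n+1)⟫
        + ρ/2 * ‖θ k (n-1) - x‖^2 + ρ/2 * ‖x - θ k (n+1)‖^2)
    -- (a) head update for the first worker n = 1
    (hHead1 : ∀ k, ∀ x : E,
      f 1 (θ (k+1) 1) + ⟪lam k 1, θ (k+1) 1 - θ k 2⟫ + ρ/2 * ‖θ (k+1) 1 - θ k 2‖^2
      ≤ f 1 x + ⟪lam k 1, x - θ k 2⟫ + ρ/2 * ‖x - θ k 2‖^2)
    -- (b) tail updates: even workers 0 < n < N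
    (hTail : ∀ k n, Even n → 0 < n → n < N → ∀ x : E,
      f n (θ (k+1) n) + ⟪lam k (n-1), θ (k+1) (n-1) - θ (k+1) n⟫
        + ⟪lam k n, θ (k+1) n - θ (k+1) (n+1)⟫
        + ρ/2 * ‖θ (k+1) (n-1) - θ (k+1) n‖^2 + ρ/2 * ‖θ (k+1) n - θ (k+1) (n+1)‖^2
      ≤ f n x + ⟪lam k (n-1), θ (k+1) (n-1) - x⟫ + ⟪lam k n, x - θ (k+1) (n+1)⟫
        + ρ/2 * ‖θ (k+1) (n-1) - x‖^2 + ρ/2 * ‖x - θ (k+1) (n+1)‖^2)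
    -- (b) tail update for the last worker n = N
    (hTailN : ∀ k, ∀ x : E,
      f N (θ (k+1) N) + ⟪lam k (N-1), θ (k+1) (N-1) - θ (k+1) N⟫
        + ρ/2 * ‖θ (k+1) (N-1) - θ (k+1) N‖^2
      ≤ f N x + ⟪lam k (N-1), θ (k+1) (N-1) - x⟫ + ρ/2 * ‖θ (k+1) (N-1) - x‖^2)
    -- (c) dual updates
    (hDual : ∀ k n, 1 ≤ n → n ≤ N - 1 →
      lam (k+1) n = lam k n + ρ • (θ (k+1) n - θ (k+1) (n+1)))
    (θstar : E) (lamstar : ℕ → E)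
    (hsaddle : ∀ (th la : ℕ → E),
      L0 N f (fun _ => θstar) la ≤ L0 N f (fun _ => θstar) lamstar ∧
      L0 N f (fun _ => θstar) lamstar ≤ L0 N f th lamstar) :
    ∀ n, Odd n → n ≤ N →
      Tendsto (fun k =>
          if n = 1 then ρ • (θ (k+1) 2 - θ k 2)
          else ρ • (θ (k+1) (n-1) - θ k (n-1)) + ρ • (θ (k+1) (n+1) - θ k (n+1)))
        atTop (𝓝 (0 : E)) := by
  have hC := gadmm_lin N hN hNeven f hconv ρ hρ θ lam hHead hHead1 hTail hTailN hDual
  have hDesc := descent N hN hNeven f ρ hρ θ lam hDual θstar lamstar hsaddle hC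
  have hCross := cross_nonpos N hN hNeven f ρ hρ θ lam hDual hC
  exact gadmm_final N ρ θstar lamstar θ lam hN hNeven hρ hDesc hCross
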